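/- Fix integers n ≥ 1 and 0 ≤ k ≤ n. Consider the alphabet consisting of symbols a_{i,j,l} for natural numbers i,j,l with j ≤ i, and symbols e_{i,l} for natural numbers i,l. Call a word w = w_n w_{n−1} ⋯ w_1 of length n in this alphabet valid (for parameters n,k) if: (i) w_n is either e_{n−1,0} or a_{n−1,j,0} for some 0 ≤ j ≤ n−1; (ii) w_1 is either e_{0,k} or (if k ≥ 1) a_{0,0,k−1}; (iii) for each 1 ≤ i ≤ n−1, if w_{i+1} = a_{i,j,l} then w_i is either e_{i−1,l+1} or a_{i−1,j',l+1} for some j ≤ j' ≤ i−1; and (iv) for each 1 ≤ i ≤ n−1, if w_{i+1} = e_{i,l} then w_i is either e_{i−1,l} or a_{i−1,j,l} for some 0 ≤ j ≤ i−1. Then the number of valid words equals the Stirling subset number S(n+1, n+1−k), the number of set partitions of {1,…,n+1} into exactly n+1−k nonempty blocks. -/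

import Mathlib

/-- Letters: `a i j l` stands for the symbol `a_{i,j,l}` and `e i l` for the
symbol `e_{i,l}`. -/
inductive Letter : Type
  | a : ℕ → ℕ → ℕ → Letter
  | e : ℕ → ℕ → Letter

/-- A letter belongs to the alphabet iff it is some `e_{i,l}`, or some
`a_{i,j,l}` with `j ≤ i`. -/
def InAlphabet : Letter → Prop
  | .a i j _ => j ≤ i
  | .e _ _ => True

/-- A word `w = w_n w_{n−1} ⋯ w_1` of length `n` is modelled as a function
`w : Fin n → Letter`, with `w_i` (for `1 ≤ i ≤ n`) being the value at
`⟨i − 1, _⟩ : Fin n`.  The word is *valid* for the parameters `(n,k)` if every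
letter lies in the alphabet and conditions (i)–(iv) hold:
(i) `w_n` is either `e_{n−1,0}` or `a_{n−1,j,0}` for some `0 ≤ j ≤ n−1`;
(ii) `w_1` is either `e_{0,k}` or (if `k ≥ 1`) `a_{0,0,k−1}`;
(iii) if `w_{i+1} = a_{i,j,l}` (for `1 ≤ i ≤ n−1`) then `w_i` is either
`e_{i−1,l+1}` or `a_{i−1,j',l+1}` for some `j ≤ j' ≤ i−1`;
(iv) if `w_{i+1} = e_{i,l}` (for `1 ≤ i ≤ n−1`) then `w_i` is either
`e_{i−1,l}` or `a_{i−1,j,l}` for some `0 ≤ j ≤ i−1`. -/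
def ValidWord (n k : ℕ) (hn : 1 ≤ n) (w : Fin n → Letter) : Prop :=
  (∀ t : Fin n, InAlphabet (w t)) ∧
  (w ⟨n - 1, by omega⟩ = .e (n - 1) 0 ∨
    ∃ j, j ≤ n - 1 ∧ w ⟨n - 1, by omega⟩ = .a (n - 1) j 0) ∧
  (w ⟨0, by omega⟩ = .e 0 k ∨ (1 ≤ k ∧ w ⟨0, by omega⟩ = .a 0 0 (k - 1))) ∧
  (∀ (i j l : ℕ) (_h1 : 1 ≤ i) (_h2 : i ≤ n - 1),
    w ⟨i, by omega⟩ = .a i j l →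
      (w ⟨i - 1, by omega⟩ = .e (i - 1) (l + 1) ∨
        ∃ j', j ≤ j' ∧ j' ≤ i - 1 ∧ w ⟨i - 1, by omega⟩ = .a (i - 1) j' (l + 1))) ∧
  (∀ (i l : ℕ) (_h1 : 1 ≤ i) (_h2 : i ≤ n - 1),
    w ⟨i, by omega⟩ = .e i l →
      (w ⟨i - 1, by omega⟩ = .e (i - 1) l ∨
        ∃ j, j ≤ i - 1 ∧ w ⟨i - 1, by omega⟩ = .a (i - 1) j l))


/-- Recursive Stirling subset numbers. -/
def st : ℕ → ℕ → ℕ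
  | 0, 0 => 1
  | 0, _+1 => 0
  | _+1, 0 => 0
  | n+1, b+1 => (b+1) * st n (b+1) + st n b

lemma st_eq_zero_of_lt : ∀ {n b : ℕ}, n < b → st n b = 0
  | 0, _+1, _ => rfl
  | n+1, b+1, h => by
      rw [st, st_eq_zero_of_lt (by omega), st_eq_zero_of_lt (by omega)]; ring

lemma st_self : ∀ n : ℕ, st n n = 1
  | 0 => rfl
  | n+1 => by rw [st, st_eq_zero_of_lt (by omega), st_self n]; ring

lemma st_succ_zero (n : ℕ) : st (n+1) 0 = 0 := rfl

lemma st_succ (n b : ℕ) (hb : 1 ≤ b) : st (n+1) b = b * st n b + st n (b-1) := by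
  obtain ⟨c, rfl⟩ : ∃ c, b = c + 1 := ⟨b - 1, by omega⟩
  simp [st]

/-- `D n b j` : number of partitions of `{1,…,n+1}` into `b` blocks whose block
containing `n+1` avoids `{1,…,j}` (recursive definition). -/
def D : ℕ → ℕ → ℕ → ℕ
  | 0, b, _ => if b = 1 then 1 else 0
  | n+1, b, 0 => st (n+2) b
  | n+1, b, j+1 => D n (b-1) j + (b-1) * D n b j

lemma D_unfold (n b j : ℕ) : D (n+1) b (j+1) = D n (b-1) j + (b-1) * D n b j := rfl

lemma D_zero_right : ∀ (n : ℕ) (b : ℕ), D n b 0 = st (n+1) b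
  | 0, 0 => rfl
  | 0, 1 => rfl
  | 0, b+2 => by simp [D, st, st_eq_zero_of_lt]
  | _+1, _ => rfl

lemma D_zero_b : ∀ (n j : ℕ), D n 0 j = 0
  | 0, _ => rfl
  | n+1, 0 => by simp [D_zero_right, st_succ_zero]
  | n+1, j+1 => by simp [D_unfold, D_zero_b n j]

lemma D_of_big : ∀ {n b : ℕ} (j : ℕ), n + 1 < b → D n b j = 0
  | 0, b, j, h => by simp [D]; omega
  | n+1, b, 0, h => by rw [D_zero_right]; exact st_eq_zero_of_lt (by omega)
  | n+1, b, j+1, h => by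
      rw [D_unfold, D_of_big j (by omega), D_of_big j (by omega)]; ring

lemma D_top : ∀ (n j : ℕ), D n (n+1) j = 1
  | 0, j => rfl
  | n+1, 0 => by rw [D_zero_right, st_self]
  | n+1, j+1 => by
      show D n (n+1) j + (n+1) * D n (n+2) j = 1
      rw [D_top n j, D_of_big j (by omega)]; ring

lemma D_of_ge : ∀ {n b j : ℕ}, 1 ≤ b → n ≤ j → D n b j = st n (b-1)
  | 0, 0, j, hb, hj => by omega
  | 0, 1, j, hb, hj => rfl
  | 0, b+2, j, hb, hj => by simp [D, st]
  | n+1, b, j+1, hb, hj => by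
      rw [D_unfold]
      rcases Nat.eq_or_lt_of_le hb with h1 | h1
      · simp [← h1, D_zero_b, st_succ_zero]
      · rw [D_of_ge (by omega) (by omega), D_of_ge (by omega) (by omega),
          st_succ n (b-1) (by omega)]
        ring

lemma D_desc : ∀ (n b j : ℕ), j ≤ n → D (n+1) b j = D (n+1) b (j+1) + D n b j := by
  intro n b j
  induction j generalizing n b with
  | zero =>
    intro _
    rcases Nat.eq_zero_or_pos b with rfl | hb
    · simp [D_zero_b]
    obtain ⟨c, rfl⟩ : ∃ c, b = c + 1 := ⟨b - 1, by omega⟩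
    rw [D_unfold, D_zero_right, D_zero_right, D_zero_right]
    simp only [Nat.add_sub_cancel]
    rw [show st (n+1+1) (c+1) = (c+1) * st (n+1) (c+1) + st (n+1) c from rfl]
    ring
  | succ j ih =>
    intro hj
    obtain ⟨m, rfl⟩ : ∃ m, n = m + 1 := ⟨n - 1, by omega⟩
    rw [D_unfold (m+1) b j, D_unfold (m+1) b (j+1),
      ih m (b-1) (by omega), ih m b (by omega), D_unfold m b j]
    ring

/-- `g n k j` : number of valid words of length `n` with `k` letters of type `a`,
whose top letter, if of type `a`, has second index at least `j`. -/
def g : ℕ → ℕ → ℕ → ℕ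
  | 0, k, _ => if k = 0 then 1 else 0
  | n+1, k, j => g n k 0 + if k = 0 then 0 else ∑ i ∈ Finset.Icc j n, g n (k-1) i

lemma g_unfold (n k j : ℕ) :
    g (n+1) k j = g n k 0 + if k = 0 then 0 else ∑ i ∈ Finset.Icc j n, g n (k-1) i := rfl

lemma g_of_k0 : ∀ (n j : ℕ), g n 0 j = 1
  | 0, _ => rfl
  | n+1, j => by simp [g_unfold, g_of_k0 n 0]

lemma g_of_big : ∀ {n k : ℕ} (j : ℕ), n < k → g n k j = 0
  | 0, k, j, h => by simp [g]; omega
  | n+1, k, j, h => by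
      rw [g_unfold, g_of_big 0 (by omega), if_neg (by omega)]
      simp only [Nat.zero_add]
      exact Finset.sum_eq_zero fun i _ => g_of_big i (by omega)

lemma g_desc (n k j : ℕ) (hk : 1 ≤ k) (hj : j ≤ n) :
    g (n+1) k j = g (n+1) k (j+1) + g n (k-1) j := by
  rw [g_unfold, g_unfold, if_neg (by omega), if_neg (by omega),
    ← Finset.Ioc_insert_left hj, ← Finset.Icc_succ_left_eq_Ioc, Order.succ_eq_add_one, Finset.sum_insert (by simp)]
  ring

lemma g_of_ge (n k j : ℕ) (hj : n < j) : g (n+1) k j = g n k 0 := by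
  rcases Nat.eq_zero_or_pos k with rfl | hk
  · simp [g_of_k0]
  rw [g_unfold, if_neg (by omega), Finset.Icc_eq_empty (by omega)]
  simp

/-- Main combinatorial identity: `g` is given by the partition counts `D`. -/
lemma g_eq_D : ∀ (n : ℕ), ∀ k ≤ n, ∀ j, g n k j = D n (n+1-k) j := by
  intro n
  induction n with
  | zero =>
    intro k hk j
    interval_cases k
    simp [g, D]
  | succ n ihn =>
    intro k hk
    have top : ∀ j, n < j → g (n+1) k j = D (n+1) (n+2-k) j := by
      intro j hj
      rw [g_of_ge n k j hj, D_of_ge (by omega) (by omega)]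
      rcases Nat.eq_or_lt_of_le hk with h1 | hlt
      · rw [g_of_big 0 (by omega), show n + 2 - k - 1 = 0 by omega, st_succ_zero]
      · rw [ihn k (by omega) 0, D_zero_right, show n + 2 - k - 1 = n + 1 - k by omega]
    have inner : ∀ d j, n + 1 - j ≤ d → g (n+1) k j = D (n+1) (n+2-k) j := by
      intro d
      induction d with
      | zero => intro j hj; exact top j (by omega)
      | succ d ihd =>
        intro j hj
        rcases Nat.lt_or_ge n j with h | h
        · exact top j h
        · rcases Nat.eq_zero_or_pos k with rfl | hkpos
          · rw [g_of_k0, show n + 2 - 0 = (n+1)+1 by omega, D_top]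
          rw [g_desc n k j hkpos h, D_desc n (n+2-k) j h,
            ihd (j+1) (by omega), ihn (k-1) (by omega) j,
            show n + 1 - (k-1) = n + 2 - k by omega]
    intro j
    exact inner (n + 1 - j) j le_rfl

section Partitions

variable {α : Type*} [DecidableEq α]

lemma insert_sdiff_self' {a : α} {s : Finset α} (ha : a ∉ s) :
    insert a s \ {a} = s := by
  ext x
  simp only [Finset.mem_sdiff, Finset.mem_insert, Finset.mem_singleton]
  constructor
  · rintro ⟨rfl | h, h2⟩
    · exact absurd rfl h2
    · exact h
  · intro h
    exact ⟨Or.inr h, fun h2 => ha (h2 ▸ h)⟩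

/-- Restriction of a partition of `insert a s` to a partition of `s`. -/
noncomputable def rest {a : α} {s : Finset α} (ha : a ∉ s)
    (Q : Finpartition (insert a s)) : Finpartition s :=
  (Q.avoid {a}).copy (insert_sdiff_self' ha)

lemma mem_rest {a : α} {s : Finset α} (ha : a ∉ s) (Q : Finpartition (insert a s))
    {c : Finset α} :
    c ∈ (rest ha Q).parts ↔ ∃ d ∈ Q.parts, ¬d ⊆ {a} ∧ d \ {a} = c := by
  simp [rest, Finpartition.mem_avoid, Finset.le_iff_subset]

lemma parts_rest_of_eq {a : α} {s : Finset α} (ha : a ∉ s) (Q : Finpartition (insert a s))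
    (h : Q.part a = {a}) : (rest ha Q).parts = Q.parts.erase {a} := by
  have hmem : ({a} : Finset α) ∈ Q.parts := h ▸ Q.part_mem.2 (Finset.mem_insert_self a s)
  ext c
  rw [mem_rest, Finset.mem_erase]
  constructor
  · rintro ⟨d, hd, hd2, rfl⟩
    have had : a ∉ d := fun had => hd2 (by
      rw [Q.part_eq_of_mem hd had] at h; rw [h])
    rw [Finset.sdiff_eq_self_of_disjoint (by simpa using had)]
    refine ⟨fun hc => ?_, hd⟩
    exact had (hc ▸ Finset.mem_singleton_self a)
  · rintro ⟨hca, hc⟩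
    have hac : a ∉ c := fun hac => hca ((Q.part_eq_of_mem hc hac).symm.trans h)
    refine ⟨c, hc, fun hsub => ?_, Finset.sdiff_eq_self_of_disjoint (by simpa using hac)⟩
    rcases Finset.subset_singleton_iff.1 hsub with rfl | rfl
    · exact Q.bot_notMem hc
    · exact hca rfl

lemma parts_rest_of_ne {a : α} {s : Finset α} (ha : a ∉ s) (Q : Finpartition (insert a s))
    (h : Q.part a ≠ {a}) :
    (rest ha Q).parts = insert (Q.part a \ {a}) (Q.parts.erase (Q.part a)) := by
  have haQ : a ∈ insert a s := Finset.mem_insert_self a s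
  have hmem : Q.part a ∈ Q.parts := Q.part_mem.2 haQ
  have hapart : a ∈ Q.part a := Q.mem_part haQ
  ext c
  rw [mem_rest, Finset.mem_insert, Finset.mem_erase]
  constructor
  · rintro ⟨d, hd, hd2, rfl⟩
    by_cases hda : a ∈ d
    · left; rw [Q.part_eq_of_mem hd hda]
    · right
      rw [Finset.sdiff_eq_self_of_disjoint (by simpa using hda)]
      exact ⟨fun hc => hda (hc ▸ hapart), hd⟩
  · rintro (rfl | ⟨hca, hc⟩)
    · exact ⟨Q.part a, hmem, fun hsub => h (Finset.Subset.antisymm hsub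
        (Finset.singleton_subset_iff.2 hapart)), rfl⟩
    · have hac : a ∉ c := fun hac => hca (Q.part_eq_of_mem hc hac).symm
      refine ⟨c, hc, fun hsub => ?_, Finset.sdiff_eq_self_of_disjoint (by simpa using hac)⟩
      rcases Finset.subset_singleton_iff.1 hsub with rfl | rfl
      · exact Q.bot_notMem hc
      · exact hac (Finset.mem_singleton_self a)

lemma part_sdiff_not_mem {a : α} {s : Finset α} (Q : Finpartition (insert a s))
    (h : Q.part a ≠ {a}) : Q.part a \ {a} ∉ Q.parts.erase (Q.part a) := by
  have haQ : a ∈ insert a s := Finset.mem_insert_self a s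
  have hmem : Q.part a ∈ Q.parts := Q.part_mem.2 haQ
  have hapart : a ∈ Q.part a := Q.mem_part haQ
  rintro hmem'
  obtain ⟨hne, hd⟩ := Finset.mem_erase.1 hmem'
  -- Q.part a \ {a} is a nonempty subset of Q.part a, so it meets Q.part a
  have hne2 : (Q.part a \ {a}).Nonempty := by
    have hnsub : ¬Q.part a ⊆ {a} := fun hsub => h (Finset.Subset.antisymm hsub
      (Finset.singleton_subset_iff.2 hapart))
    obtain ⟨x, hx, hxa⟩ := Finset.not_subset.1 hnsub
    exact ⟨x, Finset.mem_sdiff.2 ⟨hx, hxa⟩⟩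
  obtain ⟨x, hx⟩ := hne2
  have hx1 : x ∈ Q.part a := (Finset.mem_sdiff.1 hx).1
  exact hne (Q.eq_of_mem_parts hd hmem hx hx1)

/-- Extend a partition of `s` by the singleton block `{a}`. -/
def ext1 {a : α} {s : Finset α} (ha : a ∉ s) (P : Finpartition s) :
    Finpartition (insert a s) :=
  P.extend (b := {a}) (by simp [Finset.bot_eq_empty])
    (Finset.disjoint_singleton_right.2 ha)
    (by rw [Finset.sup_eq_union]; ext x; simp [or_comm])

lemma parts_ext1 {a : α} {s : Finset α} (ha : a ∉ s) (P : Finpartition s) :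
    (ext1 ha P).parts = insert {a} P.parts := rfl

lemma sup_erase_part {s : Finset α} (P : Finpartition s) {t : Finset α}
    (ht : t ∈ P.parts) : (P.parts.erase t).sup id = s \ t := by
  ext x
  rw [Finset.mem_sup, Finset.mem_sdiff]
  constructor
  · rintro ⟨d, hd, hx⟩
    obtain ⟨hdt, hdP⟩ := Finset.mem_erase.1 hd
    refine ⟨P.le hdP hx, fun hxt => hdt (P.eq_of_mem_parts hdP ht hx hxt)⟩
  · rintro ⟨hxs, hxt⟩
    obtain ⟨d, hd, hx⟩ := P.exists_mem hxs
    exact ⟨d, Finset.mem_erase.2 ⟨fun hdt => hxt (hdt ▸ hx), hd⟩, hx⟩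

/-- Extend a partition of `s` by adding `a` to the block `t`. -/
def ext2 {a : α} {s : Finset α} (ha : a ∉ s) (P : Finpartition s) (t : Finset α)
    (ht : t ∈ P.parts) : Finpartition (insert a s) :=
  (P.ofSubset (Finset.erase_subset t P.parts) (sup_erase_part P ht)).extend
    (b := insert a t)
    (by simp [Finset.bot_eq_empty])
    (by
      rw [Finset.disjoint_insert_right]
      exact ⟨by simp [ha], Finset.sdiff_disjoint⟩)
    (by
      have hts : t ⊆ s := P.le ht
      rw [Finset.sup_eq_union]
      ext x
      simp only [Finset.mem_union, Finset.mem_sdiff, Finset.mem_insert]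
      have := @hts x
      constructor
      · rintro (⟨h1, _⟩ | h1 | h1) <;> tauto
      · by_cases hxt : x ∈ t <;> rintro (rfl | h1) <;> tauto)

lemma parts_ext2 {a : α} {s : Finset α} (ha : a ∉ s) (P : Finpartition s) (t : Finset α)
    (ht : t ∈ P.parts) :
    (ext2 ha P t ht).parts = insert (insert a t) (P.parts.erase t) := rfl

lemma part_ext1 {a : α} {s : Finset α} (ha : a ∉ s) (P : Finpartition s) :
    (ext1 ha P).part a = {a} :=
  Finpartition.part_eq_of_mem _ (by rw [parts_ext1]; exact Finset.mem_insert_self _ _)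
    (Finset.mem_singleton_self a)

lemma part_ext2 {a : α} {s : Finset α} (ha : a ∉ s) (P : Finpartition s) (t : Finset α)
    (ht : t ∈ P.parts) : (ext2 ha P t ht).part a = insert a t :=
  Finpartition.part_eq_of_mem _ (by rw [parts_ext2]; exact Finset.mem_insert_self _ _)
    (Finset.mem_insert_self _ _)

lemma singleton_not_mem_parts {a : α} {s : Finset α} (ha : a ∉ s) (P : Finpartition s) :
    ({a} : Finset α) ∉ P.parts :=
  fun h => ha (P.le h (Finset.mem_singleton_self a))

lemma insert_not_mem_erase {a : α} {s : Finset α} (ha : a ∉ s) (P : Finpartition s)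
    (t : Finset α) : insert a t ∉ P.parts.erase t :=
  fun h => ha (P.le (Finset.mem_of_mem_erase h) (Finset.mem_insert_self a t))

/-- The key equivalence: partitions of `insert a s` into `b+1` blocks correspond to
partitions of `s` into `b` blocks (when `a` is alone) together with pairs of a
partition of `s` into `b+1` blocks and a chosen block (which `a` joins). -/
noncomputable def partitionEquiv {a : α} {s : Finset α} (ha : a ∉ s) (b : ℕ) :
    {Q : Finpartition (insert a s) // Q.parts.card = b + 1} ≃
      ({P : Finpartition s // P.parts.card = b} ⊕
        Σ P : {P : Finpartition s // P.parts.card = b + 1}, {t // t ∈ P.1.parts}) where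
  toFun Q :=
    if h : Q.1.part a = {a} then
      .inl ⟨rest ha Q.1, by
        rw [parts_rest_of_eq ha Q.1 h,
          Finset.card_erase_of_mem (h ▸ Q.1.part_mem.2 (Finset.mem_insert_self a s)), Q.2]
        simp⟩
    else
      .inr ⟨⟨rest ha Q.1, by
        rw [parts_rest_of_ne ha Q.1 h,
          Finset.card_insert_of_notMem (part_sdiff_not_mem Q.1 h),
          Finset.card_erase_of_mem (Q.1.part_mem.2 (Finset.mem_insert_self a s)), Q.2]
        omega⟩,
        ⟨Q.1.part a \ {a}, by
          rw [parts_rest_of_ne ha Q.1 h]; exact Finset.mem_insert_self _ _⟩⟩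
  invFun x :=
    match x with
    | .inl ⟨P, hP⟩ => ⟨ext1 ha P, by
        rw [parts_ext1, Finset.card_insert_of_notMem (singleton_not_mem_parts ha P), hP]⟩
    | .inr ⟨⟨P, hP⟩, ⟨t, ht⟩⟩ => ⟨ext2 ha P t ht, by
        rw [parts_ext2, Finset.card_insert_of_notMem (insert_not_mem_erase ha P t),
          Finset.card_erase_of_mem ht, hP]
        omega⟩
  left_inv Q := by
    by_cases h : Q.1.part a = {a}
    · dsimp only
      rw [dif_pos h]
      apply Subtype.ext
      apply Finpartition.ext
      show insert {a} (rest ha Q.1).parts = Q.1.parts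
      rw [parts_rest_of_eq ha Q.1 h,
        Finset.insert_erase (h ▸ Q.1.part_mem.2 (Finset.mem_insert_self a s))]
    · dsimp only
      rw [dif_neg h]
      apply Subtype.ext
      apply Finpartition.ext
      show insert (insert a (Q.1.part a \ {a})) ((rest ha Q.1).parts.erase (Q.1.part a \ {a}))
        = Q.1.parts
      have h1 : insert a (Q.1.part a \ {a}) = Q.1.part a := by
        rw [Finset.sdiff_singleton_eq_erase,
          Finset.insert_erase (Q.1.mem_part (Finset.mem_insert_self a s))]
      rw [h1, parts_rest_of_ne ha Q.1 h,
        Finset.erase_insert (part_sdiff_not_mem Q.1 h),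
        Finset.insert_erase (Q.1.part_mem.2 (Finset.mem_insert_self a s))]
  right_inv x := by
    match x with
    | .inl ⟨P, hP⟩ =>
      dsimp only
      rw [dif_pos (part_ext1 ha P)]
      congr 1
      apply Subtype.ext
      apply Finpartition.ext
      rw [parts_rest_of_eq ha (ext1 ha P) (part_ext1 ha P), parts_ext1,
        Finset.erase_insert (singleton_not_mem_parts ha P)]
    | .inr ⟨⟨P, hP⟩, ⟨t, ht⟩⟩ =>
      have hat : a ∉ t := fun h => ha (P.le ht h)
      have hQa : (ext2 ha P t ht).part a = insert a t := part_ext2 ha P t ht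
      have hne : (ext2 ha P t ht).part a ≠ {a} := by
        rw [hQa]
        obtain ⟨x, hx⟩ := P.nonempty_of_mem_parts ht
        intro hcon
        have : x ∈ ({a} : Finset α) := hcon ▸ Finset.mem_insert_of_mem hx
        exact hat ((Finset.mem_singleton.1 this) ▸ hx)
      dsimp only
      rw [dif_neg hne]
      have hrest : rest ha (ext2 ha P t ht) = P := by
        apply Finpartition.ext
        rw [parts_rest_of_ne ha _ hne, hQa, parts_ext2]
        have h2 : insert a t \ {a} = t := by
          rw [Finset.sdiff_singleton_eq_erase, Finset.erase_insert hat]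
        rw [h2, Finset.erase_insert (insert_not_mem_erase ha P t), Finset.insert_erase ht]
      have hval : (ext2 ha P t ht).part a \ {a} = t := by
        rw [hQa, Finset.sdiff_singleton_eq_erase, Finset.erase_insert hat]
      congr 1
      apply Sigma.ext
      · exact Subtype.ext hrest
      · apply Subtype.heq_iff_coe_eq ?_ |>.2 hval
        intro x
        dsimp only
        rw [hrest]

lemma card_partitions_empty (j : ℕ) :
    Nat.card {P : Finpartition (∅ : Finset α) // P.parts.card = j} = st 0 j := by
  have hparts : ∀ P : Finpartition (∅ : Finset α), P.parts = ∅ := fun P =>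
    Finpartition.parts_eq_empty_iff.2 Finset.bot_eq_empty.symm
  cases j with
  | zero =>
    haveI : Unique {P : Finpartition (∅ : Finset α) // P.parts.card = 0} :=
      { default := ⟨⊥, by rw [Finpartition.card_bot]; simp⟩
        uniq := fun P => Subtype.ext (Finpartition.ext
          ((hparts P.1).trans (hparts _).symm)) }
    rw [Nat.card_unique]
    rfl
  | succ b =>
    haveI : IsEmpty {P : Finpartition (∅ : Finset α) // P.parts.card = b + 1} := by
      refine ⟨fun P => ?_⟩
      have := P.2
      rw [hparts P.1] at this
      simp at this
    rw [Nat.card_of_isEmpty]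
    rfl

lemma card_partitions (s : Finset α) (j : ℕ) :
    Nat.card {P : Finpartition s // P.parts.card = j} = st s.card j := by
  induction s using Finset.induction_on generalizing j with
  | empty => exact card_partitions_empty j
  | @insert a s ha ih =>
    rw [Finset.card_insert_of_notMem ha]
    cases j with
    | zero =>
      haveI : IsEmpty {Q : Finpartition (insert a s) // Q.parts.card = 0} := by
        refine ⟨fun Q => ?_⟩
        have h1 : Q.1.parts = ∅ := Finset.card_eq_zero.1 Q.2
        have h2 := Finpartition.parts_eq_empty_iff.1 h1
        rw [Finset.bot_eq_empty] at h2
        exact Finset.insert_ne_empty a s h2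
      rw [Nat.card_of_isEmpty]
      rfl
    | succ b =>
      rw [Nat.card_congr (partitionEquiv ha b), Nat.card_sum]
      have hsig : Nat.card (Σ P : {P : Finpartition s // P.parts.card = b + 1},
          {t // t ∈ P.1.parts}) = (b + 1) * Nat.card {P : Finpartition s // P.parts.card = b + 1} := by
        rw [Nat.card_eq_fintype_card, Fintype.card_sigma]
        rw [Finset.sum_congr rfl (fun P _ => ?_), Finset.sum_const, Finset.card_univ,
          smul_eq_mul, Nat.card_eq_fintype_card, mul_comm]
        rw [Fintype.card_coe, P.2]
      rw [hsig, ih b, ih (b+1)]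
      show _ = st (s.card + 1) (b + 1)
      rw [show st (s.card + 1) (b + 1) = (b+1) * st s.card (b+1) + st s.card b from rfl]
      ring

-- WORDS SECTION (to be appended after pinned defs & arith; uses Letter, InAlphabet, ValidWord, g)

deriving instance DecidableEq for Letter

/-- Generalized validity predicate: word of length `m+1`, bottom parameter `k`,
top letter has `l`-index `l0`, and if the top letter is an `a` its `j`-index is
at least `j0`. -/
def VW (m k j0 l0 : ℕ) (w : Fin (m + 1) → Letter) : Prop :=
  (∀ t : Fin (m + 1), InAlphabet (w t)) ∧
  (w ⟨m, by omega⟩ = .e m l0 ∨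
    ∃ j, j0 ≤ j ∧ j ≤ m ∧ w ⟨m, by omega⟩ = .a m j l0) ∧
  (w ⟨0, by omega⟩ = .e 0 k ∨ (1 ≤ k ∧ w ⟨0, by omega⟩ = .a 0 0 (k - 1))) ∧
  (∀ (i j l : ℕ) (_h1 : 1 ≤ i) (_h2 : i ≤ m),
    w ⟨i, by omega⟩ = .a i j l →
      (w ⟨i - 1, by omega⟩ = .e (i - 1) (l + 1) ∨
        ∃ j', j ≤ j' ∧ j' ≤ i - 1 ∧ w ⟨i - 1, by omega⟩ = .a (i - 1) j' (l + 1))) ∧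
  (∀ (i l : ℕ) (_h1 : 1 ≤ i) (_h2 : i ≤ m),
    w ⟨i, by omega⟩ = .e i l →
      (w ⟨i - 1, by omega⟩ = .e (i - 1) l ∨
        ∃ j, j ≤ i - 1 ∧ w ⟨i - 1, by omega⟩ = .a (i - 1) j l))

lemma validWord_iff_VW (m k : ℕ) (hn : 1 ≤ m + 1) (w : Fin (m + 1) → Letter) :
    ValidWord (m + 1) k hn w ↔ VW m k 0 0 w := by
  unfold ValidWord VW
  simp only [Nat.add_sub_cancel]
  constructor
  · rintro ⟨h1, h2, h3, h4, h5⟩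
    refine ⟨h1, h2.imp id ?_, h3, h4, h5⟩
    rintro ⟨j, hj1, hj2⟩
    exact ⟨j, Nat.zero_le j, hj1, hj2⟩
  · rintro ⟨h1, h2, h3, h4, h5⟩
    refine ⟨h1, h2.imp id ?_, h3, h4, h5⟩
    rintro ⟨j, _, hj1, hj2⟩
    exact ⟨j, hj1, hj2⟩

/-- The `j`-index of a letter (0 for `e`-letters). -/
def theJ : Letter → ℕ
  | .a _ j _ => j
  | .e _ _ => 0

section Peel

variable {m : ℕ}

lemma snoc_mk_top (w' : Fin (m + 1) → Letter) (x : Letter) (h : m + 1 < m + 2) :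
    (Fin.snoc w' x : Fin (m + 2) → Letter) ⟨m + 1, h⟩ = x := by
  have he : (⟨m + 1, h⟩ : Fin (m + 2)) = Fin.last (m + 1) := rfl
  rw [he, Fin.snoc_last]

lemma snoc_mk_lt (w' : Fin (m + 1) → Letter) (x : Letter) (i : ℕ) (h : i < m + 1)
    (h2 : i < m + 2) :
    (Fin.snoc w' x : Fin (m + 2) → Letter) ⟨i, h2⟩ = w' ⟨i, h⟩ := by
  have he : (⟨i, h2⟩ : Fin (m + 2)) = Fin.castSucc ⟨i, h⟩ := Fin.ext rfl
  rw [he, Fin.snoc_castSucc]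

lemma VW_top_e {k j0 l0 : ℕ} {w : Fin (m + 2) → Letter} (hw : VW (m + 1) k j0 l0 w)
    (h : w ⟨m + 1, by omega⟩ = .e (m + 1) l0) :
    VW m k 0 l0 (fun t => w t.castSucc) := by
  obtain ⟨a1, _, a3, a4, a5⟩ := hw
  refine ⟨fun t => a1 _, ?_, a3, ?_, ?_⟩
  · have := a5 (m + 1) l0 (by omega) (by omega) h
    simp only [Nat.add_sub_cancel] at this
    refine this.imp id ?_
    rintro ⟨j, hj1, hj2⟩
    exact ⟨j, Nat.zero_le j, hj1, hj2⟩
  · intro i j l h1 h2 hi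
    exact a4 i j l h1 (by omega) hi
  · intro i l h1 h2 hi
    exact a5 i l h1 (by omega) hi

lemma VW_top_a {k j0 l0 jj : ℕ} {w : Fin (m + 2) → Letter} (hw : VW (m + 1) k j0 l0 w)
    (h : w ⟨m + 1, by omega⟩ = .a (m + 1) jj l0) :
    VW m k jj (l0 + 1) (fun t => w t.castSucc) := by
  obtain ⟨a1, _, a3, a4, a5⟩ := hw
  refine ⟨fun t => a1 _, ?_, a3, ?_, ?_⟩
  · have := a4 (m + 1) jj l0 (by omega) (by omega) h
    simp only [Nat.add_sub_cancel] at this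
    exact this
  · intro i j l h1 h2 hi
    exact a4 i j l h1 (by omega) hi
  · intro i l h1 h2 hi
    exact a5 i l h1 (by omega) hi

lemma VW_snoc_e {k j0 l0 : ℕ} {w' : Fin (m + 1) → Letter} (h' : VW m k 0 l0 w') :
    VW (m + 1) k j0 l0 (Fin.snoc w' (.e (m + 1) l0)) := by
  obtain ⟨a1, a2, a3, a4, a5⟩ := h'
  refine ⟨?_, ?_, ?_, ?_, ?_⟩
  · intro t
    induction t using Fin.lastCases with
    | last => rw [Fin.snoc_last]; trivial
    | cast t => rw [Fin.snoc_castSucc]; exact a1 t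
  · left; exact snoc_mk_top w' _ _
  · rw [snoc_mk_lt w' _ 0 (by omega) _]
    exact a3
  · intro i j l h1 h2 hi
    rcases Nat.lt_or_ge i (m + 1) with hlt | hge
    · rw [snoc_mk_lt w' _ i hlt _] at hi
      rw [snoc_mk_lt w' _ (i - 1) (by omega) _]
      exact a4 i j l h1 (by omega) hi
    · obtain rfl : i = m + 1 := by omega
      rw [snoc_mk_top] at hi
      exact absurd hi (by simp)
  · intro i l h1 h2 hi
    rcases Nat.lt_or_ge i (m + 1) with hlt | hge
    · rw [snoc_mk_lt w' _ i hlt _] at hi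
      rw [snoc_mk_lt w' _ (i - 1) (by omega) _]
      exact a5 i l h1 (by omega) hi
    · obtain rfl : i = m + 1 := by omega
      rw [snoc_mk_top] at hi
      obtain rfl : l0 = l := by simpa using hi
      rw [snoc_mk_lt w' _ (m + 1 - 1) (by omega) _]
      simp only [Nat.add_sub_cancel]
      refine a2.imp id ?_
      rintro ⟨j, _, hj1, hj2⟩
      exact ⟨j, hj1, hj2⟩

lemma VW_snoc_a {k j0 l0 jj : ℕ} {w' : Fin (m + 1) → Letter} (hj1 : j0 ≤ jj)
    (hj2 : jj ≤ m + 1) (h' : VW m k jj (l0 + 1) w') :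
    VW (m + 1) k j0 l0 (Fin.snoc w' (.a (m + 1) jj l0)) := by
  obtain ⟨a1, a2, a3, a4, a5⟩ := h'
  refine ⟨?_, ?_, ?_, ?_, ?_⟩
  · intro t
    induction t using Fin.lastCases with
    | last => rw [Fin.snoc_last]; exact hj2
    | cast t => rw [Fin.snoc_castSucc]; exact a1 t
  · right; exact ⟨jj, hj1, hj2, snoc_mk_top w' _ _⟩
  · rw [snoc_mk_lt w' _ 0 (by omega) _]
    exact a3
  · intro i j l h1 h2 hi
    rcases Nat.lt_or_ge i (m + 1) with hlt | hge
    · rw [snoc_mk_lt w' _ i hlt _] at hi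
      rw [snoc_mk_lt w' _ (i - 1) (by omega) _]
      exact a4 i j l h1 (by omega) hi
    · obtain rfl : i = m + 1 := by omega
      rw [snoc_mk_top] at hi
      obtain ⟨rfl, rfl⟩ : jj = j ∧ l0 = l := by simpa using hi
      rw [snoc_mk_lt w' _ (m + 1 - 1) (by omega) _]
      simpa only [Nat.add_sub_cancel] using a2
  · intro i l h1 h2 hi
    rcases Nat.lt_or_ge i (m + 1) with hlt | hge
    · rw [snoc_mk_lt w' _ i hlt _] at hi
      rw [snoc_mk_lt w' _ (i - 1) (by omega) _]
      exact a5 i l h1 (by omega) hi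
    · obtain rfl : i = m + 1 := by omega
      rw [snoc_mk_top] at hi
      exact absurd hi (by simp)

/-- Peeling off the top letter of a valid word. -/
noncomputable def peel (m k j0 l0 : ℕ) :
    {w : Fin (m + 2) → Letter // VW (m + 1) k j0 l0 w} ≃
      ({w : Fin (m + 1) → Letter // VW m k 0 l0 w} ⊕
        Σ jj : (Finset.Icc j0 (m + 1) : Finset ℕ),
          {w : Fin (m + 1) → Letter // VW m k jj.1 (l0 + 1) w}) where
  toFun W :=
    if he : W.1 ⟨m + 1, by omega⟩ = .e (m + 1) l0 then
      .inl ⟨fun t => W.1 t.castSucc, VW_top_e W.2 he⟩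
    else
      .inr ⟨⟨theJ (W.1 ⟨m + 1, by omega⟩), by
          rcases W.2.2.1 with he' | ⟨jj, hj1, hj2, ha⟩
          · exact absurd he' he
          · rw [ha]
            simp only [theJ]
            exact Finset.mem_Icc.2 ⟨hj1, hj2⟩⟩,
        ⟨fun t => W.1 t.castSucc, by
          rcases W.2.2.1 with he' | ⟨jj, hj1, hj2, ha⟩
          · exact absurd he' he
          · have hth : theJ (W.1 ⟨m + 1, by omega⟩) = jj := by rw [ha]; rfl
            have hres := VW_top_a W.2 ha
            rw [← hth] at hres
            exact hres⟩⟩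
  invFun x :=
    match x with
    | .inl ⟨w', h'⟩ => ⟨Fin.snoc w' (.e (m + 1) l0), VW_snoc_e h'⟩
    | .inr ⟨⟨jj, hjj⟩, ⟨w', h'⟩⟩ => ⟨Fin.snoc w' (.a (m + 1) jj l0),
        VW_snoc_a (Finset.mem_Icc.1 hjj).1 (Finset.mem_Icc.1 hjj).2 h'⟩
  left_inv W := by
    obtain ⟨w, hw⟩ := W
    dsimp only
    by_cases he : w ⟨m + 1, by omega⟩ = Letter.e (m + 1) l0
    · rw [dif_pos he]
      apply Subtype.ext
      funext t
      dsimp only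
      induction t using Fin.lastCases with
      | last =>
        rw [show Fin.last (m + 1) = (⟨m + 1, by omega⟩ : Fin (m + 2)) from rfl,
          snoc_mk_top]
        exact he.symm
      | cast t => rw [Fin.snoc_castSucc]
    · rw [dif_neg he]
      rcases hw.2.1 with he' | ⟨jj, hj1, hj2, ha⟩
      · exact absurd he' he
      have hth : theJ (w ⟨m + 1, by omega⟩) = jj := by rw [ha]; rfl
      apply Subtype.ext
      funext t
      dsimp only
      induction t using Fin.lastCases with
      | last =>
        rw [show Fin.last (m + 1) = (⟨m + 1, by omega⟩ : Fin (m + 2)) from rfl,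
          snoc_mk_top, hth, ha]
      | cast t => rw [Fin.snoc_castSucc]
  right_inv x := by
    rcases x with ⟨w', h'⟩ | ⟨⟨jj, hjj⟩, ⟨w', h'⟩⟩
    · dsimp only
      rw [dif_pos (snoc_mk_top w' (Letter.e (m + 1) l0) (by omega))]
      congr 1
      apply Subtype.ext
      show (fun t : Fin (m + 1) =>
        (Fin.snoc w' (Letter.e (m + 1) l0) : Fin (m + 2) → Letter) t.castSucc) = w'
      funext t
      exact Fin.snoc_castSucc _ _ _
    · dsimp only
      have ha : (Fin.snoc w' (Letter.a (m + 1) jj l0) : Fin (m + 2) → Letter)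
          ⟨m + 1, by omega⟩ = Letter.a (m + 1) jj l0 := snoc_mk_top _ _ _
      have hne : ¬((Fin.snoc w' (Letter.a (m + 1) jj l0) : Fin (m + 2) → Letter)
          ⟨m + 1, by omega⟩ = Letter.e (m + 1) l0) := by rw [ha]; simp
      rw [dif_neg hne]
      have hth : theJ ((Fin.snoc w' (Letter.a (m + 1) jj l0) : Fin (m + 2) → Letter)
          ⟨m + 1, by omega⟩) = jj := by rw [ha]; rfl
      congr 1
      apply Sigma.ext
      · exact Subtype.ext hth
      · refine (Subtype.heq_iff_coe_eq ?_).2 ?_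
        · intro v
          show VW m k (theJ _) (l0 + 1) v ↔ VW m k jj (l0 + 1) v
          rw [hth]
        · show (fun t : Fin (m + 1) =>
            (Fin.snoc w' (Letter.a (m + 1) jj l0) : Fin (m + 2) → Letter) t.castSucc) = w'
          funext t
          exact Fin.snoc_castSucc _ _ _

end Peel

lemma VW_zero_iff (k j0 l0 : ℕ) (w : Fin 1 → Letter) :
    VW 0 k j0 l0 w ↔
      ((l0 = k ∧ w = fun _ => .e 0 k) ∨
        (j0 = 0 ∧ l0 + 1 = k ∧ w = fun _ => .a 0 0 l0)) := by
  constructor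
  · rintro ⟨a1, a2, a3, -, -⟩
    have hwfun : w = fun _ => w ⟨0, by omega⟩ := by
      funext t
      congr 1
      exact Fin.ext (by omega)
    rcases a2 with h | ⟨j, hj0, hj, h⟩ <;> rcases a3 with h' | ⟨hk, h'⟩
    · rw [h] at h'
      obtain rfl : l0 = k := by simpa using h'
      exact Or.inl ⟨rfl, by rw [hwfun, h]⟩
    · rw [h] at h'
      exact absurd h' (by simp)
    · rw [h] at h'
      exact absurd h' (by simp)
    · rw [h] at h'
      obtain ⟨rfl, rfl⟩ : j = 0 ∧ l0 = k - 1 := by simpa using h'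
      exact Or.inr ⟨by omega, by omega, by rw [hwfun, h]⟩
  · rintro (⟨rfl, rfl⟩ | ⟨rfl, rfl, rfl⟩)
    · exact ⟨fun t => trivial, Or.inl rfl, Or.inl rfl,
        fun i j l h1 h2 => by omega, fun i l h1 h2 => by omega⟩
    · refine ⟨fun t => Nat.le_refl 0, Or.inr ⟨0, Nat.le_refl 0, Nat.le_refl 0, rfl⟩,
        Or.inr ⟨by omega, rfl⟩,
        fun i j l h1 h2 => by omega, fun i l h1 h2 => by omega⟩

lemma card_VW_zero (k j0 l0 : ℕ) :
    Nat.card {w : Fin 1 → Letter // VW 0 k j0 l0 w} =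
      if l0 ≤ k then g 1 (k - l0) j0 else 0 := by
  by_cases h1 : l0 = k
  · subst h1
    haveI : Unique {w : Fin 1 → Letter // VW 0 l0 j0 l0 w} :=
      { default := ⟨fun _ => .e 0 l0, (VW_zero_iff l0 j0 l0 _).2 (Or.inl ⟨rfl, rfl⟩)⟩
        uniq := fun w => Subtype.ext (by
          rcases (VW_zero_iff l0 j0 l0 _).1 w.2 with ⟨-, h⟩ | ⟨-, hcon, -⟩
          · exact h
          · omega) }
    rw [Nat.card_unique, if_pos le_rfl, Nat.sub_self, g_of_k0]
  by_cases h2 : j0 = 0 ∧ l0 + 1 = k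
  · obtain ⟨rfl, rfl⟩ := h2
    haveI : Unique {w : Fin 1 → Letter // VW 0 (l0 + 1) 0 l0 w} :=
      { default := ⟨fun _ => .a 0 0 l0, (VW_zero_iff _ 0 l0 _).2 (Or.inr ⟨rfl, rfl, rfl⟩)⟩
        uniq := fun w => Subtype.ext (by
          rcases (VW_zero_iff _ 0 l0 _).1 w.2 with ⟨hcon, -⟩ | ⟨-, -, h⟩
          · omega
          · exact h) }
    rw [Nat.card_unique, if_pos (by omega), show l0 + 1 - l0 = 1 by omega]
    rw [g_unfold, if_neg (by omega), Finset.Icc_self, Finset.sum_singleton, g_of_k0]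
    rfl
  · haveI : IsEmpty {w : Fin 1 → Letter // VW 0 k j0 l0 w} := by
      refine ⟨fun w => ?_⟩
      rcases (VW_zero_iff k j0 l0 _).1 w.2 with ⟨hl, -⟩ | ⟨hj, hl, -⟩
      · exact h1 hl
      · exact h2 ⟨hj, hl⟩
    rw [Nat.card_of_isEmpty]
    by_cases hl : l0 ≤ k
    · rw [if_pos hl]
      rcases Nat.lt_or_ge (k - l0) 2 with hsmall | hbig
      · have hk1 : k - l0 = 1 := by omega
        have hj0 : j0 ≠ 0 := fun hj => h2 ⟨hj, by omega⟩
        obtain ⟨j1, rfl⟩ : ∃ j1, j0 = j1 + 1 := ⟨j0 - 1, by omega⟩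
        rw [hk1, g_unfold, Finset.Icc_eq_empty (by omega)]
        simp [g]
      · exact (g_of_big _ (by omega)).symm
    · rw [if_neg hl]

lemma finite_VW : ∀ (m k j0 l0 : ℕ), Finite {w : Fin (m + 1) → Letter // VW m k j0 l0 w}
  | 0, k, j0, l0 => by
      haveI : Subsingleton {w : Fin 1 → Letter // VW 0 k j0 l0 w} := by
        constructor
        rintro ⟨w, hw⟩ ⟨v, hv⟩
        apply Subtype.ext
        rcases (VW_zero_iff k j0 l0 _).1 hw with ⟨h1, hw'⟩ | ⟨h1, h2, hw'⟩ <;>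
          rcases (VW_zero_iff k j0 l0 _).1 hv with ⟨g1, hv'⟩ | ⟨g1, g2, hv'⟩ <;>
          first
            | (exact hw'.trans hv'.symm)
            | omega
      exact Finite.of_subsingleton
  | m+1, k, j0, l0 => by
      haveI : ∀ jj : (Finset.Icc j0 (m + 1) : Finset ℕ),
          Finite {w : Fin (m + 1) → Letter // VW m k jj.1 (l0 + 1) w} :=
        fun jj => finite_VW m k jj.1 (l0 + 1)
      haveI := finite_VW m k 0 l0
      exact Finite.of_equiv _ (peel m k j0 l0).symm

lemma nat_card_sigma {ι : Type*} [Fintype ι] (T : ι → Type*) [∀ i, Finite (T i)] :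
    Nat.card (Σ i, T i) = ∑ i, Nat.card (T i) := by
  letI : ∀ i, Fintype (T i) := fun i => Fintype.ofFinite _
  simp [Nat.card_eq_fintype_card]

lemma card_VW : ∀ (m k j0 l0 : ℕ),
    Nat.card {w : Fin (m + 1) → Letter // VW m k j0 l0 w} =
      if l0 ≤ k then g (m + 1) (k - l0) j0 else 0
  | 0, k, j0, l0 => card_VW_zero k j0 l0
  | m+1, k, j0, l0 => by
    haveI := finite_VW m k 0 l0
    haveI : ∀ jj : (Finset.Icc j0 (m + 1) : Finset ℕ),
        Finite {w : Fin (m + 1) → Letter // VW m k jj.1 (l0 + 1) w} :=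
      fun jj => finite_VW m k jj.1 (l0 + 1)
    rw [Nat.card_congr (peel m k j0 l0), Nat.card_sum, nat_card_sigma]
    have hsum : (∑ jj : (Finset.Icc j0 (m + 1) : Finset ℕ),
        Nat.card {w : Fin (m + 1) → Letter // VW m k jj.1 (l0 + 1) w})
        = ∑ i ∈ Finset.Icc j0 (m + 1),
            (if l0 + 1 ≤ k then g (m + 1) (k - (l0 + 1)) i else 0) := by
      rw [← Finset.sum_coe_sort (Finset.Icc j0 (m + 1))
        (fun i => if l0 + 1 ≤ k then g (m + 1) (k - (l0 + 1)) i else 0)]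
      exact Finset.sum_congr rfl fun jj _ => card_VW m k jj.1 (l0 + 1)
    rw [card_VW m k 0 l0, hsum]
    by_cases hl : l0 ≤ k
    · rcases Nat.eq_or_lt_of_le hl with rfl | hlt
      · simp only [if_pos le_rfl, Nat.sub_self, g_of_k0]
        rw [Finset.sum_congr rfl (fun i _ => if_neg (by omega)), Finset.sum_const,
          smul_eq_mul, Nat.mul_zero]
      · rw [if_pos hl, if_pos hl, g_unfold (m + 1) (k - l0) j0,
          if_neg (show ¬(k - l0) = 0 by omega)]
        congr 1
        exact Finset.sum_congr rfl fun i _ => by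
          rw [if_pos (show l0 + 1 ≤ k by omega), show k - (l0 + 1) = k - l0 - 1 by omega]
    · rw [if_neg hl, if_neg hl,
        Finset.sum_congr rfl (fun i _ => if_neg (by omega)), Finset.sum_const,
        smul_eq_mul, Nat.mul_zero]

/-- The Stirling subset number `S(m,j)`: the number of set partitions of an
`m`-element set into exactly `j` nonempty blocks. -/
noncomputable def stirlingSubset (m j : ℕ) : ℕ :=
  Nat.card {P : Finpartition (Finset.univ : Finset (Fin m)) // P.parts.card = j}


lemma stirlingSubset_eq_st (m j : ℕ) : stirlingSubset m j = st m j := by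
  unfold stirlingSubset
  have := card_partitions (Finset.univ : Finset (Fin m)) j
  rwa [Finset.card_univ, Fintype.card_fin] at this

/-- For `n ≥ 1` and `0 ≤ k ≤ n`, the number of valid words of length `n` for
the parameters `(n,k)` equals the Stirling subset number `S(n+1, n+1−k)`. -/
theorem card_validWords (n k : ℕ) (hn : 1 ≤ n) (hk : k ≤ n) :
    Nat.card {w : Fin n → Letter // ValidWord n k hn w}
      = stirlingSubset (n + 1) (n + 1 - k) := by
  obtain ⟨m, rfl⟩ : ∃ m, n = m + 1 := ⟨n - 1, by omega⟩
  rw [Nat.card_congr (Equiv.subtypeEquivRight (fun w => validWord_iff_VW m k hn w)),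
    card_VW m k 0 0, if_pos (Nat.zero_le k), Nat.sub_zero,
    g_eq_D (m + 1) k (by omega) 0, D_zero_right, stirlingSubset_eq_st]
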